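/- The element C_q = q^{-1}T1^2 + qT2^2 + q^{-3/2}(1-q^2)T1 T2 I belongs to the center of the algebra U_q(iso_2); that is, C_q commutes with each of the generators I, T1, T2. -/
import Mathlib

set_option maxHeartbeats 1600000


/-- The element C_q = q⁻¹T1² + qT2² + q^{-3/2}(1-q²)T1T2I belongs to the
center of U_q(iso₂): it commutes with each of the generators I, T1, T2. -/
theorem stmt3 (q sq : ℂ) (hq : q ≠ 0) (hsq : sq ^ 2 = q)
    (A : Type*) [Ring A] [Algebra ℂ A] (I T1 T2 : A)
    (h1 : sq • (I * T2) - sq⁻¹ • (T2 * I) = T1)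
    (h2 : sq • (T1 * I) - sq⁻¹ • (I * T1) = T2)
    (h3 : sq • (T2 * T1) - sq⁻¹ • (T1 * T2) = 0) :
    let Cq := q⁻¹ • T1 ^ 2 + q • T2 ^ 2 + ((q⁻¹ * sq⁻¹) * (1 - q ^ 2)) • (T1 * T2 * I)
    Cq * I = I * Cq ∧ Cq * T1 = T1 * Cq ∧ Cq * T2 = T2 * Cq := by
  subst hsq
  have hsq0 : sq ≠ 0 := by
    intro h; exact hq (by rw [h]; ring)
  -- normal form relations
  have e1 : I * T2 = (sq ^ 2)⁻¹ • (T2 * I) + sq⁻¹ • T1 := by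
    have h := congrArg (fun x => sq⁻¹ • x) h1
    simp only [smul_sub, smul_smul, inv_mul_cancel₀ hsq0, one_smul] at h
    rw [← h]; match_scalars <;> (try ring_nf) <;> (try field_simp) <;> (try ring)
  have e2 : I * T1 = (sq ^ 2) • (T1 * I) - sq • T2 := by
    have h := congrArg (fun x => sq • x) h2
    simp only [smul_sub, smul_smul, mul_inv_cancel₀ hsq0, one_smul] at h
    rw [← h]; match_scalars <;> (try ring_nf) <;> (try field_simp) <;> (try ring)
  have e3 : T2 * T1 = (sq ^ 2)⁻¹ • (T1 * T2) := by
    have h := congrArg (fun x => sq⁻¹ • x) h3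
    simp only [smul_sub, smul_smul, inv_mul_cancel₀ hsq0, one_smul, smul_zero,
      sub_eq_zero] at h
    rw [h]; match_scalars <;> (try ring_nf) <;> (try field_simp) <;> (try ring)
  -- monomial lemmas
  have mA : I * (T1 * T1)
      = (sq ^ 2 * sq ^ 2) • (T1 * (T1 * I)) - (sq ^ 2 * sq + sq * (sq ^ 2)⁻¹) • (T1 * T2) := by
    calc I * (T1 * T1) = (I * T1) * T1 := by rw [mul_assoc]
      _ = ((sq ^ 2) • (T1 * I) - sq • T2) * T1 := by rw [e2]
      _ = (sq ^ 2) • (T1 * (I * T1)) - sq • (T2 * T1) := by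
          simp only [sub_mul, smul_mul_assoc, mul_assoc]
      _ = (sq ^ 2) • (T1 * ((sq ^ 2) • (T1 * I) - sq • T2)) - sq • ((sq ^ 2)⁻¹ • (T1 * T2)) := by
          rw [e2, e3]
      _ = _ := by
          simp only [mul_sub, mul_smul_comm, smul_sub, smul_smul]
          module
  have mB : I * (T2 * T2)
      = ((sq ^ 2)⁻¹ * (sq ^ 2)⁻¹) • (T2 * (T2 * I))
        + ((sq ^ 2)⁻¹ * (sq ^ 2)⁻¹ * sq⁻¹ + sq⁻¹) • (T1 * T2) := by
    calc I * (T2 * T2) = (I * T2) * T2 := by rw [mul_assoc]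
      _ = ((sq ^ 2)⁻¹ • (T2 * I) + sq⁻¹ • T1) * T2 := by rw [e1]
      _ = (sq ^ 2)⁻¹ • (T2 * (I * T2)) + sq⁻¹ • (T1 * T2) := by
          simp only [add_mul, smul_mul_assoc, mul_assoc]
      _ = (sq ^ 2)⁻¹ • (T2 * ((sq ^ 2)⁻¹ • (T2 * I) + sq⁻¹ • T1)) + sq⁻¹ • (T1 * T2) := by
          rw [e1]
      _ = ((sq ^ 2)⁻¹ * (sq ^ 2)⁻¹) • (T2 * (T2 * I))
          + ((sq ^ 2)⁻¹ * sq⁻¹) • (T2 * T1) + sq⁻¹ • (T1 * T2) := by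
          simp only [mul_add, mul_smul_comm, smul_add, smul_smul]
      _ = _ := by
          rw [e3]; simp only [smul_smul]
          match_scalars <;> (try ring_nf) <;> (try field_simp) <;> (try ring)
  have mC : I * (T1 * (T2 * I))
      = T1 * (T2 * (I * I)) + (sq ^ 2 * sq⁻¹) • (T1 * (T1 * I)) - sq • (T2 * (T2 * I)) := by
    calc I * (T1 * (T2 * I)) = (I * T1) * (T2 * I) := by rw [mul_assoc]
      _ = (sq ^ 2) • (T1 * (I * (T2 * I))) - sq • (T2 * (T2 * I)) := by
          rw [e2]; simp only [sub_mul, smul_mul_assoc, mul_assoc]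
      _ = (sq ^ 2) • (T1 * ((I * T2) * I)) - sq • (T2 * (T2 * I)) := by rw [mul_assoc]
      _ = (sq ^ 2) • (T1 * (((sq ^ 2)⁻¹ • (T2 * I) + sq⁻¹ • T1) * I)) - sq • (T2 * (T2 * I)) := by
          rw [e1]
      _ = _ := by
          simp only [add_mul, smul_mul_assoc, mul_add, mul_smul_comm, smul_add, smul_smul,
            mul_assoc]
          match_scalars <;> (try ring_nf) <;> (try field_simp) <;> (try ring)
  -- right-multiplied versions of e3
  have e3I : T2 * (T1 * I) = (sq ^ 2)⁻¹ • (T1 * (T2 * I)) := by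
    rw [← mul_assoc, e3, smul_mul_assoc, mul_assoc]
  have e3T2 : T2 * (T1 * T2) = (sq ^ 2)⁻¹ • (T1 * (T2 * T2)) := by
    rw [← mul_assoc, e3, smul_mul_assoc, mul_assoc]
  have m2 : T2 * (T2 * T1) = ((sq ^ 2)⁻¹ * (sq ^ 2)⁻¹) • (T1 * (T2 * T2)) := by
    rw [e3, mul_smul_comm, e3T2, smul_smul]
  have m3 : T2 * (T1 * T1) = ((sq ^ 2)⁻¹ * (sq ^ 2)⁻¹) • (T1 * (T1 * T2)) := by
    rw [← mul_assoc, e3, smul_mul_assoc, mul_assoc, e3, mul_smul_comm, smul_smul, ← mul_assoc]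
  have m4 : T2 * (T1 * (T2 * I)) = (sq ^ 2)⁻¹ • (T1 * (T2 * (T2 * I))) := by
    rw [← mul_assoc, e3, smul_mul_assoc, mul_assoc]
  intro Cq
  have hCq : Cq = (sq ^ 2)⁻¹ • T1 ^ 2 + (sq ^ 2) • T2 ^ 2
      + (((sq ^ 2)⁻¹ * sq⁻¹) * (1 - (sq ^ 2) ^ 2)) • (T1 * T2 * I) := rfl
  refine ⟨?_, ?_, ?_⟩
  · -- Cq * I = I * Cq
    rw [hCq]
    simp only [pow_two, mul_add, add_mul, smul_mul_assoc, mul_smul_comm, mul_assoc]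
    rw [mA, mB, mC]
    match_scalars <;> (try ring_nf) <;> (try field_simp) <;> (try ring)
  · -- Cq * T1 = T1 * Cq
    rw [hCq]
    simp only [pow_two, mul_add, add_mul, smul_mul_assoc, mul_smul_comm, mul_assoc]
    rw [m2, e2]
    simp only [mul_sub, mul_smul_comm, smul_sub, smul_smul]
    rw [e3I]
    simp only [mul_smul_comm, smul_smul]
    match_scalars <;> (try ring_nf) <;> (try field_simp) <;> (try ring)
  · -- Cq * T2 = T2 * Cq
    rw [hCq]
    simp only [pow_two, mul_add, add_mul, smul_mul_assoc, mul_smul_comm, mul_assoc]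
    rw [m3, m4, e1]
    simp only [mul_add, mul_smul_comm, smul_add, smul_smul]
    rw [e3]
    simp only [mul_smul_comm, smul_smul]
    match_scalars <;> (try ring_nf) <;> (try field_simp) <;> (try ring)
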